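/- If a hypergraph E has the property that every non-empty subhypergraph of E has a maximal edge, then no subhypergraph of E is isomorphic to the hypergraph ω; and conversely. -/

import Mathlib

/-- `C` is a cover of the hypergraph `E`. -/
def IsCover {α : Type*} (E C : Set (Set α)) : Prop :=
  C ⊆ E ∧ ⋃₀ C = ⋃₀ E

/-- `C` is a minimal cover of the hypergraph `E`. -/
def IsMinimalCover {α : Type*} (E C : Set (Set α)) : Prop :=
  IsCover E C ∧ ∀ D ⊆ C, IsCover E D → D = C

/-- `S` is a subhypergraph of `E`. -/
def IsSubhypergraph {α : Type*} (E S : Set (Set α)) : Prop :=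
  ∃ F ⊆ E, ∃ A ⊆ ⋃₀ F, S = (fun T => T ∩ A) '' F

/-- `S` has a maximal edge. -/
def HasMaximalEdge {α : Type*} (S : Set (Set α)) : Prop :=
  ∃ M ∈ S, ∀ T ∈ S, M ⊆ T → T = M

/-- `S` is isomorphic to the hypergraph ω, whose vertex set is ℕ and whose
edges are the initial segments `{0, …, n-1}` for `n : ℕ`. -/
def IsoToOmega {α : Type*} (S : Set (Set α)) : Prop :=
  ∃ f : ℕ → α, Function.Injective f ∧ Set.range f = ⋃₀ S ∧
    S = {T | ∃ n : ℕ, T = f '' Set.Iio n}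

lemma sub_trans {α : Type*} {E S T : Set (Set α)}
    (h1 : IsSubhypergraph E S) (h2 : IsSubhypergraph S T) : IsSubhypergraph E T := by
  obtain ⟨F, hF, A, hA, rfl⟩ := h1
  obtain ⟨G, hG, B, hB, rfl⟩ := h2
  refine ⟨{U ∈ F | U ∩ A ∈ G}, fun U hU => hF hU.1, A ∩ B, ?_, ?_⟩
  · intro x hx
    obtain ⟨g, hg, hxg⟩ := hB hx.2
    obtain ⟨U, hU, rfl⟩ := hG hg
    exact ⟨U, ⟨hU, hg⟩, hxg.1⟩
  · ext V
    constructor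
    · rintro ⟨g, hg, rfl⟩
      obtain ⟨U, hU, rfl⟩ := hG hg
      exact ⟨U, ⟨hU, hg⟩, by simp [Set.inter_assoc]⟩
    · rintro ⟨U, ⟨hU, hUA⟩, rfl⟩
      exact ⟨U ∩ A, hUA, by simp [Set.inter_assoc]⟩

theorem stmt_5 {α : Type*} (E : Set (Set α)) :
    (∀ S, IsSubhypergraph E S → S.Nonempty → HasMaximalEdge S) ↔
      (∀ S, IsSubhypergraph E S → ¬ IsoToOmega S) := by
  constructor
  · intro h S hsub hiso
    obtain ⟨f, hinj, hrange, hS⟩ := hiso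
    have hne : S.Nonempty := ⟨f '' Set.Iio 0, hS ▸ ⟨0, rfl⟩⟩
    obtain ⟨M, hM, hmax⟩ := h S hsub hne
    rw [hS] at hM
    obtain ⟨n, rfl⟩ := hM
    have hT : f '' Set.Iio (n + 1) ∈ S := hS ▸ ⟨n + 1, rfl⟩
    have hsub' : f '' Set.Iio n ⊆ f '' Set.Iio (n + 1) :=
      Set.image_mono (fun k hk => lt_trans hk (Nat.lt_succ_self n))
    have heq := hmax _ hT hsub'
    have : f n ∈ f '' Set.Iio n := heq ▸ ⟨n, Nat.lt_succ_self n, rfl⟩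
    obtain ⟨k, hk, hfk⟩ := this
    exact absurd (hinj hfk) (Nat.ne_of_lt hk)
  · intro h S hsub hne
    by_contra hnomax
    have step : ∀ M, M ∈ S → ∃ T, T ∈ S ∧ M ⊆ T ∧ T ≠ M := by
      intro M hM
      by_contra hc
      push_neg at hc
      exact hnomax ⟨M, hM, hc⟩
    obtain ⟨M0, hM0⟩ := hne
    let seq : ℕ → {M : Set α // M ∈ S} := fun n =>
      Nat.rec ⟨M0, hM0⟩
        (fun _ p => ⟨(step p.1 p.2).choose, (step p.1 p.2).choose_spec.1⟩) n
    have hstep : ∀ n, (seq n).1 ⊆ (seq (n + 1)).1 ∧ (seq (n + 1)).1 ≠ (seq n).1 :=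
      fun n => ⟨(step (seq n).1 (seq n).2).choose_spec.2.1,
        (step (seq n).1 (seq n).2).choose_spec.2.2⟩
    have hmono : ∀ {m n}, m ≤ n → (seq m).1 ⊆ (seq n).1 := by
      intro m n hmn
      induction hmn with
      | refl => exact subset_rfl
      | step _ ih => exact ih.trans (hstep _).1
    have hex : ∀ n, ∃ x, x ∈ (seq (n + 1)).1 ∧ x ∉ (seq n).1 := by
      intro n
      have : ¬ (seq (n + 1)).1 ⊆ (seq n).1 := fun hsub' =>
        (hstep n).2 (subset_antisymm hsub' (hstep n).1)
      exact Set.not_subset.mp this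
    let f : ℕ → α := fun n => (hex n).choose
    have hf1 : ∀ n, f n ∈ (seq (n + 1)).1 := fun n => (hex n).choose_spec.1
    have hf2 : ∀ n, f n ∉ (seq n).1 := fun n => (hex n).choose_spec.2
    have hfmem : ∀ k n, f k ∈ (seq n).1 ↔ k < n := by
      intro k n
      constructor
      · intro hk
        by_contra hlt
        push_neg at hlt
        exact hf2 k (hmono hlt hk)
      · intro hk
        exact hmono hk (hf1 k)
    have hinj : Function.Injective f := by
      intro j k hjk
      by_contra hne'
      rcases lt_or_gt_of_ne hne' with h' | h'
      · exact hf2 k (hjk ▸ (hfmem j k).mpr h')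
      · exact hf2 j (hjk ▸ (hfmem k j).mpr h')
    set F' : Set (Set α) := Set.range (fun n => (seq n).1) with hF'
    set A' : Set α := Set.range f with hA'
    set T : Set (Set α) := (fun U => U ∩ A') '' F' with hT
    have hkey : ∀ n, (seq n).1 ∩ A' = f '' Set.Iio n := by
      intro n
      ext x
      constructor
      · rintro ⟨hx, k, rfl⟩
        exact ⟨k, (hfmem k n).mp hx, rfl⟩
      · rintro ⟨k, hk, rfl⟩
        exact ⟨(hfmem k n).mpr hk, k, rfl⟩
    have hTsub : IsSubhypergraph E T := by
      apply sub_trans hsub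
      refine ⟨F', ?_, A', ?_, rfl⟩
      · rintro U ⟨n, rfl⟩; exact (seq n).2
      · rintro x ⟨n, rfl⟩
        exact ⟨(seq (n + 1)).1, ⟨n + 1, rfl⟩, hf1 n⟩
    apply h T hTsub
    refine ⟨f, hinj, ?_, ?_⟩
    · ext x
      constructor
      · rintro ⟨k, rfl⟩
        exact ⟨(seq (k + 1)).1 ∩ A', ⟨(seq (k + 1)).1, ⟨k + 1, rfl⟩, rfl⟩,
          ⟨hf1 k, k, rfl⟩⟩
      · rintro ⟨U, ⟨V, ⟨n, rfl⟩, rfl⟩, hx⟩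
        have hx' : x ∈ ((seq n).1 : Set α) ∩ A' := hx
        rw [hkey] at hx'
        obtain ⟨k, _, rfl⟩ := hx'
        exact ⟨k, rfl⟩
    · ext U
      constructor
      · rintro ⟨V, ⟨n, rfl⟩, rfl⟩
        exact ⟨n, (hkey n).symm ▸ rfl⟩
      · rintro ⟨n, rfl⟩
        exact ⟨(seq n).1, ⟨n, rfl⟩, hkey n⟩
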